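/- (Example 4.10, explicit feature maps for first and second moments on the unit ball.) Let Y = {y ∈ ℝ^d : ‖y‖_2 ≤ 1}, W := ℝ^d × Sym_d(ℝ) with inner product ⟨(v,Q),(v′,Q′)⟩ := ⟨v,v′⟩ + Tr(QQ′), s(y) := (y, y y^⊤), and Z := {(v,Q) ∈ W : Q ⪰ 0, Q ⪰ v v^⊤, Tr(Q) ≤ 1}. Let g_1, …, g_r : X × W → W be arbitrary functions with sup_{x ∈ X, p ∈ Z} ‖g_j(x,p)‖ ≤ B for every j, and define Φ(x,p) : W → ℝ^r by (Φ(x,p)(u))_j := ⟨g_j(x,p), u⟩, so that ‖Φ(x,p)‖_op² ≤ r·B². Let y_1,…,y_T ∈ Y be realized outcomes with targets z_t := s(y_t), suppose the EVI condition holds with tolerances ε_t ≤ 4·r·B², and suppose for each t and each p in the support of D_t, μ_{t,p} is a finitely supported probability measure on Y with E_{ỹ∼μ_{t,p}}[s(ỹ)] = p. Then for every j ∈ {1,…,r}, the distinguisher f(x,p,y) := ⟨g_j(x,p), s(y)⟩ satisfies OIGap_T(f) ≤ 4·sqrt(r·B²·T). -/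

import Mathlib

open scoped BigOperators RealInnerProductSpace
open MeasureTheory

/-- A finitely supported probability distribution, given by finitely many
weighted atoms. -/
structure FinDist (α : Type*) where
  n : ℕ
  w : Fin n → ℝ
  pt : Fin n → α
  w_nonneg : ∀ i, 0 ≤ w i
  w_sum : ∑ i, w i = 1

namespace FinDist

noncomputable def exp {α V : Type*} [AddCommMonoid V] [Module ℝ V]
    (D : FinDist α) (f : α → V) : V :=
  ∑ i, D.w i • f (D.pt i)

def support {α : Type*} (D : FinDist α) : Set α :=
  {a | ∃ i, D.w i ≠ 0 ∧ D.pt i = a}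

end FinDist

/-- The space of symmetric `d × d` real matrices (as a subspace of the
Euclidean space of all `d × d` matrices with the Frobenius inner product). -/
def symMatrices (d : ℕ) : Submodule ℝ (EuclideanSpace ℝ (Fin d × Fin d)) where
  carrier := {Q | ∀ i j, Q (i, j) = Q (j, i)}
  add_mem' := by
    intro A B hA hB i j
    show A (i, j) + B (i, j) = A (j, i) + B (j, i)
    rw [hA i j, hB i j]
  zero_mem' := by intro i j; rfl
  smul_mem' := by
    intro c A hA i j
    show c * A (i, j) = c * A (j, i)
    rw [hA i j]

/-- `W = ℝ^d × Sym_d(ℝ)` with inner product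
`⟨(v,Q),(v',Q')⟩ = ⟨v,v'⟩ + Tr(QQ')`. -/
abbrev Wspace (d : ℕ) :=
  WithLp 2 (EuclideanSpace ℝ (Fin d) × symMatrices d)

/-- The statistic map `s(y) = (y, y yᵀ)`. -/
noncomputable def sVec (d : ℕ) (y : EuclideanSpace ℝ (Fin d)) : Wspace d :=
  (WithLp.equiv 2 (EuclideanSpace ℝ (Fin d) × symMatrices d)).symm
    (y, ⟨(WithLp.equiv 2 (∀ _ : Fin d × Fin d, ℝ)).symm fun q => y q.1 * y q.2,
      fun i j => mul_comm (y i) (y j)⟩)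

/-- The second component of an element of `Wspace d`, as a matrix. -/
noncomputable def sndMatrix {d : ℕ} (p : Wspace d) : Matrix (Fin d) (Fin d) ℝ :=
  Matrix.of fun i j => (p.ofLp.2 : EuclideanSpace ℝ (Fin d × Fin d)) (i, j)

/-- `Z := {(v,Q) : Q ⪰ 0, Q ⪰ vvᵀ, Tr Q ≤ 1}` inside `Wspace d`. -/
noncomputable def psdMomentSet (d : ℕ) : Set (Wspace d) :=
  {p | (sndMatrix p).PosSemidef ∧
    ((sndMatrix p) - Matrix.vecMulVec p.ofLp.1.ofLp p.ofLp.1.ofLp).PosSemidef ∧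
    (sndMatrix p).trace ≤ 1}


namespace FinDist

lemma exp_inner_right {α V : Type*} [NormedAddCommGroup V] [InnerProductSpace ℝ V]
    (D : FinDist α) (v : V) (f : α → V) :
    D.exp (fun a => (⟪v, f a⟫ : ℝ)) = ⟪v, D.exp f⟫ := by
  simp [FinDist.exp, inner_sum, real_inner_smul_right, smul_eq_mul]

lemma abs_exp_le {α : Type*} (D : FinDist α) (f : α → ℝ) {C : ℝ}
    (h : ∀ i, D.w i ≠ 0 → |f (D.pt i)| ≤ C) : |D.exp f| ≤ C := by
  calc |D.exp f| ≤ ∑ i, |D.w i • f (D.pt i)| := Finset.abs_sum_le_sum_abs _ _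
    _ ≤ ∑ i, D.w i * C := by
        refine Finset.sum_le_sum fun i _ => ?_
        rcases eq_or_ne (D.w i) 0 with h0 | h0
        · simp [h0]
        · rw [smul_eq_mul, abs_mul, abs_of_nonneg (D.w_nonneg i)]
          exact mul_le_mul_of_nonneg_left (h i h0) (D.w_nonneg i)
    _ = C := by rw [← Finset.sum_mul, D.w_sum, one_mul]

lemma exp_sub {α : Type*} (D : FinDist α) (f g : α → ℝ) :
    D.exp f - D.exp g = D.exp (fun a => f a - g a) := by
  simp [FinDist.exp, smul_eq_mul, mul_sub, Finset.sum_sub_distrib]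

lemma exp_congr_support {α V : Type*} [AddCommMonoid V] [Module ℝ V] (D : FinDist α)
    (f g : α → V) (h : ∀ a ∈ D.support, f a = g a) : D.exp f = D.exp g := by
  refine Finset.sum_congr rfl fun i _ => ?_
  rcases eq_or_ne (D.w i) 0 with h0 | h0
  · simp [h0]
  · rw [h _ ⟨i, h0, rfl⟩]

end FinDist

/-- Norm-squared induction for defensive forecasting. -/
lemma norm_sum_sq_le {V : Type*} [NormedAddCommGroup V] [InnerProductSpace ℝ V]
    (T : ℕ) (w : ℕ → V) (ε : ℕ → ℝ) (c : ℝ)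
    (hIP : ∀ t < T, ⟪∑ τ ∈ Finset.range t, w τ, w t⟫ ≤ ε t)
    (hc : ∀ t < T, ‖w t‖ ^ 2 + 2 * ε t ≤ c) :
    ‖∑ t ∈ Finset.range T, w t‖ ^ 2 ≤ c * T := by
  induction T with
  | zero => simp
  | succ n ih =>
    have hn : ∀ t < n, (⟪∑ τ ∈ Finset.range t, w τ, w t⟫ : ℝ) ≤ ε t :=
      fun t ht => hIP t (ht.trans (Nat.lt_succ_self n))
    have hcn : ∀ t < n, ‖w t‖ ^ 2 + 2 * ε t ≤ c :=
      fun t ht => hc t (ht.trans (Nat.lt_succ_self n))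
    have h1 := ih hn hcn
    rw [Finset.sum_range_succ, norm_add_sq_real]
    have h2 := hIP n (Nat.lt_succ_self n)
    have h3 := hc n (Nat.lt_succ_self n)
    push_cast
    nlinarith

lemma coord_sum {r : ℕ} {ι : Type*} (s : Finset ι)
    (f : ι → WithLp 2 (∀ _ : Fin r, ℝ)) (j : Fin r) :
    (∑ i ∈ s, f i) j = ∑ i ∈ s, f i j := by
  classical
  induction s using Finset.induction with
  | empty => rfl
  | insert _ _ h ih => rw [Finset.sum_insert h, Finset.sum_insert h, ← ih]; rfl

lemma coord_abs_le_norm {r : ℕ} (v : WithLp 2 (∀ _ : Fin r, ℝ)) (j : Fin r) :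
    |v j| ≤ ‖v‖ := by
  have h := EuclideanSpace.norm_eq (𝕜 := ℝ) (n := Fin r) v
  rw [h, show |v j| = Real.sqrt ((v j)^2) by rw [Real.sqrt_sq_eq_abs]]
  apply Real.sqrt_le_sqrt
  calc (v j)^2
      ≤ ∑ i, (v i)^2 :=
        Finset.single_le_sum (f := fun i => (v i)^2) (fun i _ => sq_nonneg _)
          (Finset.mem_univ j)
    _ = ∑ i, ‖v i‖^2 := by simp [Real.norm_eq_abs, sq_abs]

namespace Helper

variable {d : ℕ}

lemma psd_diag_nonneg {Q : Matrix (Fin d) (Fin d) ℝ} (hQ : Q.PosSemidef) (i : Fin d) :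
    0 ≤ Q i i := by
  have := hQ.dotProduct_mulVec_nonneg (Pi.single i 1)
  simpa [dotProduct, Matrix.mulVec, Pi.single_apply, Finset.sum_ite_eq',
    Finset.sum_ite_eq] using this

lemma psd_trace_nonneg {Q : Matrix (Fin d) (Fin d) ℝ} (hQ : Q.PosSemidef) :
    0 ≤ Q.trace :=
  Finset.sum_nonneg fun i _ => psd_diag_nonneg hQ i

lemma psd_entry_sq_le {Q : Matrix (Fin d) (Fin d) ℝ} (hQ : Q.PosSemidef) (i j : Fin d) :
    Q i j ^ 2 ≤ Q i i * Q j j := by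
  rcases eq_or_ne i j with rfl | hij
  · rw [sq]
  · have hsym : Q j i = Q i j := by
      have h2 := congrFun (congrFun hQ.1 i) j
      simpa [Matrix.conjTranspose_apply] using h2
    have key : ∀ a : ℝ, 0 ≤ Q i i * (a * a) + (2 * Q i j) * a + Q j j := by
      intro a
      have h := hQ.dotProduct_mulVec_nonneg (Pi.single i a + Pi.single j 1)
      simp only [star_trivial, dotProduct, Matrix.mulVec, Pi.add_apply,
        Pi.single_apply, mul_add, add_mul, ite_mul, mul_ite, mul_zero, zero_mul,
        mul_one, one_mul, Finset.sum_add_distrib, Finset.sum_ite_eq',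
        Finset.mem_univ, if_true] at h
      rw [hsym] at h
      ring_nf at h ⊢
      linarith
    have hd := discrim_le_zero key
    rw [discrim] at hd
    nlinarith [hd]

lemma frob_sq_le_trace_sq {Q : Matrix (Fin d) (Fin d) ℝ} (hQ : Q.PosSemidef) :
    ∑ q : Fin d × Fin d, Q q.1 q.2 ^ 2 ≤ Q.trace ^ 2 := by
  rw [Fintype.sum_prod_type, Matrix.trace, sq, Finset.sum_mul_sum]
  exact Finset.sum_le_sum fun i _ => Finset.sum_le_sum fun j _ => psd_entry_sq_le hQ i j

lemma euclid_norm_sq {n : Type*} [Fintype n] (v : EuclideanSpace ℝ n) :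
    ‖v‖ ^ 2 = ∑ i, v i ^ 2 := by
  rw [EuclideanSpace.norm_eq, Real.sq_sqrt (Finset.sum_nonneg fun i _ => sq_nonneg _)]
  simp [sq_abs]

lemma wnorm_sq (p : Wspace d) :
    ‖p‖ ^ 2 = ‖p.ofLp.1‖ ^ 2 + ∑ q : Fin d × Fin d, sndMatrix p q.1 q.2 ^ 2 := by
  rw [WithLp.prod_norm_sq_eq_of_L2]
  congr 1
  have : ‖WithLp.snd p‖ = ‖(p.ofLp.2 : EuclideanSpace ℝ (Fin d × Fin d))‖ := rfl
  rw [this, euclid_norm_sq]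
  rfl

lemma trace_vecMulVec_self (v : EuclideanSpace ℝ (Fin d)) :
    (Matrix.vecMulVec v v).trace = ‖v‖ ^ 2 := by
  rw [euclid_norm_sq]
  simp [Matrix.trace, Matrix.diag, Matrix.vecMulVec_apply, sq]

lemma mem_norm_le {p : Wspace d} (hp : p ∈ psdMomentSet d) : ‖p‖ ≤ Real.sqrt 2 := by
  obtain ⟨h1, h2, h3⟩ := hp
  have htr0 : 0 ≤ (sndMatrix p).trace := psd_trace_nonneg h1
  have hv : ‖p.ofLp.1‖ ^ 2 ≤ (sndMatrix p).trace := by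
    have := psd_trace_nonneg h2
    rw [Matrix.trace_sub, trace_vecMulVec_self] at this
    linarith
  have hfr : ∑ q : Fin d × Fin d, sndMatrix p q.1 q.2 ^ 2 ≤ 1 := by
    calc _ ≤ (sndMatrix p).trace ^ 2 := frob_sq_le_trace_sq h1
    _ ≤ 1 := by nlinarith
  have : ‖p‖ ^ 2 ≤ 2 := by rw [wnorm_sq]; linarith
  have h2' : (Real.sqrt 2) ^ 2 = 2 := Real.sq_sqrt (by norm_num)
  nlinarith [norm_nonneg p, Real.sqrt_nonneg 2]

lemma zero_mem_psd : (0 : Wspace d) ∈ psdMomentSet d := by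
  have hz : sndMatrix (0 : Wspace d) = 0 := by
    ext i j
    rfl
  refine ⟨hz ▸ Matrix.PosSemidef.zero, ?_, ?_⟩
  · have : sndMatrix (0 : Wspace d) - Matrix.vecMulVec (0 : Wspace d).ofLp.1.ofLp (0 : Wspace d).ofLp.1.ofLp
        = 0 := by
      ext i j
      simp only [hz, Matrix.vecMulVec_apply, Matrix.sub_apply, Matrix.zero_apply]
      show 0 - (0:Wspace d).ofLp.1 i * (0:Wspace d).ofLp.1 j = 0
      show 0 - (0:ℝ) * 0 = 0
      ring
    rw [this]
    exact Matrix.PosSemidef.zero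
  · rw [hz]
    simp

lemma sndMatrix_sVec (y : EuclideanSpace ℝ (Fin d)) :
    sndMatrix (sVec d y) = Matrix.vecMulVec y y := by
  ext i j
  rfl

open Matrix in
lemma vecMulVec_self_posSemidef (y : EuclideanSpace ℝ (Fin d)) :
    (Matrix.vecMulVec y y).PosSemidef := by
  refine Matrix.posSemidef_iff_dotProduct_mulVec.mpr ⟨?_, ?_⟩
  · ext i j
    simp [Matrix.conjTranspose_apply, Matrix.vecMulVec_apply, mul_comm]
  · intro v
    have : (star v) ⬝ᵥ ((Matrix.vecMulVec y y) *ᵥ v) = (∑ l, y l * v l) ^ 2 := by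
      simp only [star_trivial, dotProduct, Matrix.mulVec, Matrix.vecMulVec_apply, sq]
      rw [Finset.sum_mul_sum]
      congr 1
      ext k
      rw [Finset.mul_sum]
      congr 1
      ext l
      ring
    rw [this]
    positivity

lemma sVec_fst (y : EuclideanSpace ℝ (Fin d)) : (sVec d y).ofLp.1 = y := rfl

lemma sVec_mem {y : EuclideanSpace ℝ (Fin d)} (hy : ‖y‖ ≤ 1) :
    sVec d y ∈ psdMomentSet d := by
  refine ⟨?_, ?_, ?_⟩
  · rw [sndMatrix_sVec]; exact vecMulVec_self_posSemidef y
  · have : sndMatrix (sVec d y) - Matrix.vecMulVec (sVec d y).ofLp.1.ofLp (sVec d y).ofLp.1.ofLp = 0 := by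
      rw [sndMatrix_sVec, sVec_fst, sub_self]
    rw [this]; exact Matrix.PosSemidef.zero
  · rw [sndMatrix_sVec, trace_vecMulVec_self]
    nlinarith [norm_nonneg y]

end Helper

/-- Example 4.10: explicit feature maps for first and second
moments on the unit ball.  With `H = ℝ^r`, `Φ(x,p)(u)_j = ⟨g_j(x,p), u⟩`,
targets `s(y_t) = (y_t, y_t y_tᵀ)`, EVI tolerances `ε_t ≤ 4rB²`, and
generating measures on the unit ball matching the forecast moments, each
distinguisher `f(x,p,y) = ⟨g_j(x,p), s(y)⟩` has
`OIGap_T(f) ≤ 4 sqrt(r B² T)`. -/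
theorem stmt_19
    {X : Type*} [Nonempty X] {d r : ℕ} (hd : 1 ≤ d) (hr : 1 ≤ r)
    (B : ℝ)
    (g : Fin r → X → Wspace d → Wspace d)
    (hB : ∀ (j : Fin r) (x : X), ∀ p ∈ psdMomentSet d, ‖g j x p‖ ≤ B)
    (T : ℕ) (hT : 1 ≤ T)
    (x : ℕ → X) (y : ℕ → EuclideanSpace ℝ (Fin d)) (hy : ∀ t < T, ‖y t‖ ≤ 1)
    (D : ℕ → FinDist (Wspace d))
    (hD : ∀ t < T, (D t).support ⊆ psdMomentSet d)
    (ε : ℕ → ℝ) (hε : ∀ t < T, 0 ≤ ε t)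
    (hεle : ∀ t < T, ε t ≤ 4 * (r : ℝ) * B ^ 2)
    (hEVI : ∀ t < T, ∀ z' ∈ psdMomentSet d,
      (D t).exp (fun p =>
        (⟪(∑ τ ∈ Finset.range t, (D τ).exp (fun q =>
            (WithLp.equiv 2 (∀ _ : Fin r, ℝ)).symm
              (fun j => (⟪g j (x τ) q, sVec d (y τ) - q⟫ : ℝ)))),
          (WithLp.equiv 2 (∀ _ : Fin r, ℝ)).symm
            (fun j => (⟪g j (x t) p, z' - p⟫ : ℝ))⟫)) ≤ ε t)
    (μ : ℕ → Wspace d → FinDist (EuclideanSpace ℝ (Fin d)))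
    (hμY : ∀ t < T, ∀ p ∈ (D t).support, ∀ k, ‖(μ t p).pt k‖ ≤ 1)
    (hμ : ∀ t < T, ∀ p ∈ (D t).support, (μ t p).exp (fun y' => sVec d y') = p)
    (j : Fin r) :
    |(∑ t ∈ Finset.range T,
        (D t).exp (fun p => (⟪g j (x t) p, sVec d (y t)⟫ : ℝ)))
      - (∑ t ∈ Finset.range T, (D t).exp (fun p =>
          (μ t p).exp (fun y' => (⟪g j (x t) p, sVec d y'⟫ : ℝ))))| ≤
      4 * Real.sqrt ((r : ℝ) * B ^ 2 * (T : ℝ)) := by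
  classical
  have hB0 : 0 ≤ B :=
    le_trans (norm_nonneg _) (hB j (Classical.arbitrary X) 0 Helper.zero_mem_psd)
  set W : ℕ → WithLp 2 (∀ _ : Fin r, ℝ) := fun τ => (D τ).exp (fun q =>
      (WithLp.equiv 2 (∀ _ : Fin r, ℝ)).symm
        (fun j => (⟪g j (x τ) q, sVec d (y τ) - q⟫ : ℝ))) with hW
  have hWj : ∀ (t : ℕ) (j' : Fin r),
      W t j' = (D t).exp (fun q => (⟪g j' (x t) q, sVec d (y t) - q⟫ : ℝ)) := by
    intro t j'
    simp only [hW, FinDist.exp]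
    rw [coord_sum]
    rfl
  have hIP : ∀ t < T, (⟪∑ τ ∈ Finset.range t, W τ, W t⟫ : ℝ) ≤ ε t := by
    intro t ht
    have h := hEVI t ht (sVec d (y t)) (Helper.sVec_mem (hy t ht))
    rw [FinDist.exp_inner_right] at h
    simp only [hW]
    exact h
  have hWnorm : ∀ t < T, ‖W t‖ ^ 2 ≤ 8 * (r : ℝ) * B ^ 2 := by
    intro t ht
    have habs : ∀ j' : Fin r, |W t j'| ≤ Real.sqrt 8 * B := by
      intro j'
      rw [hWj t j']
      apply FinDist.abs_exp_le
      intro i hi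
      have hpZ : (D t).pt i ∈ psdMomentSet d := hD t ht ⟨i, hi, rfl⟩
      have hs8 : Real.sqrt 8 = 2 * Real.sqrt 2 := by
        rw [show (8:ℝ) = 2^2 * 2 by norm_num, Real.sqrt_mul (by positivity),
          Real.sqrt_sq (by norm_num)]
      calc |(⟪g j' (x t) ((D t).pt i), sVec d (y t) - (D t).pt i⟫ : ℝ)|
          ≤ ‖g j' (x t) ((D t).pt i)‖ * ‖sVec d (y t) - (D t).pt i‖ :=
            abs_real_inner_le_norm _ _
        _ ≤ B * (Real.sqrt 2 + Real.sqrt 2) := by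
            refine mul_le_mul (hB j' (x t) _ hpZ) ?_ (norm_nonneg _) hB0
            calc ‖sVec d (y t) - (D t).pt i‖
                ≤ ‖sVec d (y t)‖ + ‖(D t).pt i‖ := norm_sub_le _ _
              _ ≤ Real.sqrt 2 + Real.sqrt 2 := by
                  exact add_le_add (Helper.mem_norm_le (Helper.sVec_mem (hy t ht)))
                    (Helper.mem_norm_le hpZ)
        _ = Real.sqrt 8 * B := by rw [hs8]; ring
    calc ‖W t‖ ^ 2 = ∑ j' : Fin r, (W t j') ^ 2 := Helper.euclid_norm_sq (W t)
      _ ≤ ∑ _j' : Fin r, (Real.sqrt 8 * B) ^ 2 := by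
          refine Finset.sum_le_sum fun j' _ => ?_
          rw [← sq_abs]
          exact pow_le_pow_left₀ (abs_nonneg _) (habs j') 2
      _ = (r : ℝ) * (Real.sqrt 8 * B) ^ 2 := by
          rw [Finset.sum_const, Finset.card_univ, Fintype.card_fin, nsmul_eq_mul]
      _ = 8 * (r : ℝ) * B ^ 2 := by
          rw [mul_pow, Real.sq_sqrt (by norm_num)]; ring
  have hsum : ‖∑ t ∈ Finset.range T, W t‖ ^ 2 ≤ (16 * (r : ℝ) * B ^ 2) * T := by
    refine norm_sum_sq_le T W ε _ hIP fun t ht => ?_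
    have h1 := hWnorm t ht
    have h2 := hεle t ht
    linarith
  have key : ∀ t < T,
      (D t).exp (fun p => (⟪g j (x t) p, sVec d (y t)⟫ : ℝ))
        - (D t).exp (fun p =>
            (μ t p).exp (fun y' => (⟪g j (x t) p, sVec d y'⟫ : ℝ)))
      = W t j := by
    intro t ht
    rw [hWj t j, FinDist.exp_sub]
    refine FinDist.exp_congr_support _ _ _ fun p hp => ?_
    have h1 : (μ t p).exp (fun y' => (⟪g j (x t) p, sVec d y'⟫ : ℝ))
        = ⟪g j (x t) p, p⟫ := by
      rw [FinDist.exp_inner_right, hμ t ht p hp]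
    rw [h1, ← inner_sub_right]
  have hcoord :
      (∑ t ∈ Finset.range T,
        (D t).exp (fun p => (⟪g j (x t) p, sVec d (y t)⟫ : ℝ)))
      - (∑ t ∈ Finset.range T, (D t).exp (fun p =>
          (μ t p).exp (fun y' => (⟪g j (x t) p, sVec d y'⟫ : ℝ))))
      = (∑ t ∈ Finset.range T, W t) j := by
    rw [coord_sum, ← Finset.sum_sub_distrib]
    exact Finset.sum_congr rfl fun t ht => key t (Finset.mem_range.mp ht)
  rw [hcoord]
  have h1 : |(∑ t ∈ Finset.range T, W t) j| ≤ ‖∑ t ∈ Finset.range T, W t‖ :=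
    coord_abs_le_norm _ j
  have h2 : ‖∑ t ∈ Finset.range T, W t‖ ≤ Real.sqrt ((16 * (r : ℝ) * B ^ 2) * T) := by
    rw [← Real.sqrt_sq (norm_nonneg (∑ t ∈ Finset.range T, W t))]
    exact Real.sqrt_le_sqrt hsum
  have h3 : Real.sqrt ((16 * (r : ℝ) * B ^ 2) * T) = 4 * Real.sqrt ((r : ℝ) * B ^ 2 * T) := by
    rw [show (16 * (r : ℝ) * B ^ 2) * T = 4 ^ 2 * ((r : ℝ) * B ^ 2 * T) by ring,
      Real.sqrt_mul (by positivity), Real.sqrt_sq (by norm_num)]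
  linarith
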